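/- (Generalized Hölder inequality for infinitely many functions) Let $(\Omega,\mathcal{F},\mu)$ be a measure space, $0<p_i<\infty$ with $\sum_{i=1}^\infty 1/p_i = 1/p$, and let $f_i\ge 0$ be measurable. If $\prod_{i=1}^\infty \|f_i\|_{L^{p_i}} < \infty$ (the infinite product converges), then the pointwise infinite product $\prod_{i=1}^\infty f_i(x)$ converges for a.e. $x$ and defines a measurable function satisfying $\|\prod_{i=1}^\infty f_i\|_{L^p} \le \prod_{i=1}^\infty \|f_i\|_{L^{p_i}}$. -/

import Mathlib

open MeasureTheory Filter Topology ENNReal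

noncomputable section

/-- The value of an infinite product in `ℝ≥0∞`, as the `limsup` of partial
products (equal to the limit whenever the partial products converge). -/
def iprod (c : ℕ → ℝ≥0∞) : ℝ≥0∞ :=
  Filter.limsup (fun n => ∏ i ∈ Finset.range n, c i) Filter.atTop

/-- Convergence of an infinite product in `ℝ≥0∞` to a finite value. -/
def IProdConv (c : ℕ → ℝ≥0∞) : Prop :=
  ∃ L : ℝ≥0∞, L ≠ ∞ ∧ Tendsto (fun n => ∏ i ∈ Finset.range n, c i) atTop (𝓝 L)

/-- The dyadic cube of generation `k` indexed by `m ∈ ℤⁿ`. -/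
def dyadicCube (n : ℕ) (k : ℤ) (m : Fin n → ℤ) : Set (Fin n → ℝ) :=
  {x | ∀ j, (m j : ℝ) * (2:ℝ) ^ (-k) ≤ x j ∧ x j < ((m j : ℝ) + 1) * (2:ℝ) ^ (-k)}

/-- Average of `f` over the dyadic cube `(k, m)` (w.r.t. Lebesgue measure). -/
def dyadicAvg {n : ℕ} (f : (Fin n → ℝ) → ℝ≥0∞) (k : ℤ) (m : Fin n → ℤ) : ℝ≥0∞ :=
  (∫⁻ y in dyadicCube n k m, f y) / volume (dyadicCube n k m)

/-- The dyadic maximal function. -/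
def Md {n : ℕ} (f : (Fin n → ℝ) → ℝ≥0∞) (x : Fin n → ℝ) : ℝ≥0∞ :=
  ⨆ (k : ℤ) (m : Fin n → ℤ) (_ : x ∈ dyadicCube n k m), dyadicAvg f k m

/-- The generalized dyadic maximal function involving the infinite product. -/
def MMd {n : ℕ} (f : ℕ → (Fin n → ℝ) → ℝ≥0∞) (x : Fin n → ℝ) : ℝ≥0∞ :=
  ⨆ (k : ℤ) (m : Fin n → ℤ) (_ : x ∈ dyadicCube n k m),
    iprod (fun i => dyadicAvg (f i) k m)

/-- Weighted `L^q` norm (for `ℝ≥0∞`-valued `f`). -/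
def wnorm {α : Type*} [MeasurableSpace α] (μ : Measure α) (q : ℝ)
    (w : α → ℝ≥0∞) (f : α → ℝ≥0∞) : ℝ≥0∞ :=
  (∫⁻ x, f x ^ q * w x ∂μ) ^ (1 / q)

end


lemma real_prod_conv (d : ℕ → ℝ) (hd : ∀ i, 0 ≤ d i)
    (hs : Summable (fun i => max (d i - 1) 0)) :
    ∃ l : ℝ, 0 ≤ l ∧ Tendsto (fun n => ∏ i ∈ Finset.range n, d i) atTop (𝓝 l) := by
  set u : ℕ → ℝ := fun i => max (d i) 1 with hu
  set v : ℕ → ℝ := fun i => min (d i) 1 with hv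
  have huv : ∀ i, d i = u i * v i := by
    intro i; rcases le_total (d i) 1 with h | h
    · simp [hu, hv, max_eq_right h, min_eq_left h]
    · simp [hu, hv, max_eq_left h, min_eq_right h, mul_comm]
  have hu1 : ∀ i, 1 ≤ u i := fun i => le_max_right _ _
  have hv0 : ∀ i, 0 ≤ v i := fun i => le_min (hd i) zero_le_one
  have hv1 : ∀ i, v i ≤ 1 := fun i => min_le_right _ _
  have hUnn : ∀ n, 0 ≤ ∏ i ∈ Finset.range n, u i := fun n =>
    Finset.prod_nonneg fun i _ => le_trans zero_le_one (hu1 i)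
  have hVnn : ∀ n, 0 ≤ ∏ i ∈ Finset.range n, v i := fun n =>
    Finset.prod_nonneg fun i _ => hv0 i
  have hUmono : Monotone (fun n => ∏ i ∈ Finset.range n, u i) := by
    apply monotone_nat_of_le_succ
    intro n
    rw [Finset.prod_range_succ]
    exact le_mul_of_one_le_right (hUnn n) (hu1 n)
  have hUbdd : BddAbove (Set.range fun n => ∏ i ∈ Finset.range n, u i) := by
    refine ⟨Real.exp (∑' i, max (d i - 1) 0), ?_⟩
    rintro _ ⟨n, rfl⟩
    calc ∏ i ∈ Finset.range n, u i
        ≤ ∏ i ∈ Finset.range n, Real.exp (max (d i - 1) 0) := by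
          apply Finset.prod_le_prod (fun i _ => le_trans zero_le_one (hu1 i))
          intro i _
          have h1 : u i = max (d i - 1) 0 + 1 := by
            rcases le_total (d i) 1 with h | h
            · simp [hu, max_eq_right h, max_eq_right (by linarith : d i - 1 ≤ 0)]
            · simp [hu, max_eq_left h, max_eq_left (by linarith : (0:ℝ) ≤ d i - 1)]
          rw [h1]
          exact Real.add_one_le_exp _
      _ = Real.exp (∑ i ∈ Finset.range n, max (d i - 1) 0) := by
          rw [Real.exp_sum]
      _ ≤ Real.exp (∑' i, max (d i - 1) 0) :=
          Real.exp_le_exp.2 (Summable.sum_le_tsum _ (fun i _ => le_max_right _ _) hs)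
  have hU := tendsto_atTop_ciSup hUmono hUbdd
  have hVanti : Antitone (fun n => ∏ i ∈ Finset.range n, v i) := by
    apply antitone_nat_of_succ_le
    intro n
    rw [Finset.prod_range_succ]
    exact mul_le_of_le_one_right (hVnn n) (hv1 n)
  have hVbdd : BddBelow (Set.range fun n => ∏ i ∈ Finset.range n, v i) :=
    ⟨0, by rintro _ ⟨n, rfl⟩; exact hVnn n⟩
  have hV := tendsto_atTop_ciInf hVanti hVbdd
  refine ⟨(⨆ n, ∏ i ∈ Finset.range n, u i) * (⨅ n, ∏ i ∈ Finset.range n, v i), ?_, ?_⟩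
  · exact mul_nonneg (le_trans (hUnn 0) (le_ciSup hUbdd 0)) (le_ciInf hVnn)
  · have := hU.mul hV
    refine this.congr fun n => ?_
    rw [← Finset.prod_mul_distrib]
    exact Finset.prod_congr rfl fun i _ => (huv i).symm

lemma enn_prod_conv (c : ℕ → ℝ≥0∞) (hc : ∀ i, c i ≠ ∞)
    (hs : (∑' i, (c i - 1)) ≠ ∞) :
    ∃ l : ℝ≥0∞, l ≠ ∞ ∧ Tendsto (fun n => ∏ i ∈ Finset.range n, c i) atTop (𝓝 l) := by
  have hsummable : Summable (fun i => ((c i - 1)).toReal) := ENNReal.summable_toReal hs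
  have hkey : ∀ i, (c i - 1).toReal = max ((c i).toReal - 1) 0 := by
    intro i
    rcases le_total (c i) 1 with h | h
    · rw [tsub_eq_zero_of_le h]
      have h2 : (c i).toReal ≤ 1 := by
        simpa using ENNReal.toReal_mono (by simp) h
      simp [max_eq_right (by linarith : (c i).toReal - 1 ≤ 0)]
    · rw [ENNReal.toReal_sub_of_le h (hc i)]
      have h2 : (1:ℝ) ≤ (c i).toReal := by
        simpa using ENNReal.toReal_mono (hc i) h
      simp [max_eq_left (by linarith : (0:ℝ) ≤ (c i).toReal - 1)]
  have hsum2 : Summable (fun i => max ((c i).toReal - 1) 0) := by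
    refine hsummable.congr fun i => hkey i
  obtain ⟨l₀, hl₀, htend⟩ := real_prod_conv (fun i => (c i).toReal)
    (fun i => ENNReal.toReal_nonneg) hsum2
  refine ⟨ENNReal.ofReal l₀, ENNReal.ofReal_ne_top, ?_⟩
  have := (ENNReal.continuous_ofReal.continuousAt (x := l₀)).tendsto.comp htend
  refine this.congr fun n => ?_
  simp only [Function.comp]
  rw [← ENNReal.toReal_prod, ENNReal.ofReal_toReal]
  exact (ENNReal.prod_lt_top (fun i _ => lt_top_iff_ne_top.2 (hc i))).ne

lemma enn_sub_one_le_rpow_div {Q : ℝ} (hQ : 1 ≤ Q) (c : ℝ≥0∞) :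
    c - 1 ≤ c ^ Q / ENNReal.ofReal Q := by
  have hQ0 : 0 < Q := lt_of_lt_of_le one_pos hQ
  rcases eq_or_ne c ∞ with rfl | hc
  · rw [ENNReal.top_rpow_of_pos hQ0, ENNReal.top_div_of_ne_top ENNReal.ofReal_ne_top]
    exact le_top
  rcases le_total c 1 with h | h
  · simp [tsub_eq_zero_of_le h]
  · rw [ENNReal.le_div_iff_mul_le
      (Or.inl (by simp [hQ0] : ENNReal.ofReal Q ≠ 0))
      (Or.inl ENNReal.ofReal_ne_top)]
    set r := c.toReal with hr
    have hr1 : (1:ℝ) ≤ r := by simpa using ENNReal.toReal_mono hc h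
    have hbern : (r - 1) * Q ≤ r ^ Q := by
      have := one_add_mul_self_le_rpow_one_add (by linarith : (-1:ℝ) ≤ r - 1) hQ
      have h2 : 1 + (r - 1) = r := by ring
      rw [h2] at this
      nlinarith [Real.rpow_nonneg (by linarith : (0:ℝ) ≤ r) Q]
    have hc' : c = ENNReal.ofReal r := by rw [hr, ENNReal.ofReal_toReal hc]
    calc (c - 1) * ENNReal.ofReal Q
        = ENNReal.ofReal ((r - 1) * Q) := by
          rw [hc', ← ENNReal.ofReal_one, ← ENNReal.ofReal_sub _ zero_le_one,
            ← ENNReal.ofReal_mul (by linarith)]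
      _ ≤ ENNReal.ofReal (r ^ Q) := ENNReal.ofReal_le_ofReal hbern
      _ = c ^ Q := by
          rw [hc', ENNReal.ofReal_rpow_of_nonneg (by linarith) hQ0.le]

lemma enn_rpow_tendsto_var {u : ℕ → ℝ≥0∞} {l : ℝ≥0∞} (hl : l ≠ ∞)
    (hu : Tendsto u atTop (𝓝 l)) {r : ℕ → ℝ} {p : ℝ} (hp : 0 < p)
    (hr : Tendsto r atTop (𝓝 p)) :
    Tendsto (fun n => u n ^ r n) atTop (𝓝 (l ^ p)) := by
  have hufin : ∀ᶠ n in atTop, u n ≠ ∞ :=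
    (hu.eventually_lt_const (lt_top_iff_ne_top.2 hl)).mono fun n h => h.ne
  have hrpos : ∀ᶠ n in atTop, 0 < r n := hr.eventually_const_lt hp
  have h1 : Tendsto (fun n => (u n).toReal) atTop (𝓝 l.toReal) :=
    (ENNReal.tendsto_toReal hl).comp hu
  have h2 : Tendsto (fun n => ((u n).toReal, r n)) atTop (𝓝 (l.toReal, p)) :=
    h1.prodMk_nhds hr
  have hcont : ContinuousAt (fun q : ℝ × ℝ => q.1 ^ q.2) (l.toReal, p) :=
    Real.continuousAt_rpow (l.toReal, p) (Or.inr hp)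
  have h3 : Tendsto (fun n => (u n).toReal ^ r n) atTop (𝓝 (l.toReal ^ p)) :=
    hcont.tendsto.comp h2
  have h4 : Tendsto (fun n => ENNReal.ofReal ((u n).toReal ^ r n)) atTop
      (𝓝 (ENNReal.ofReal (l.toReal ^ p))) :=
    (ENNReal.continuous_ofReal.continuousAt).tendsto.comp h3
  have heq : l ^ p = ENNReal.ofReal (l.toReal ^ p) := by
    conv_lhs => rw [← ENNReal.ofReal_toReal hl]
    rw [ENNReal.ofReal_rpow_of_nonneg ENNReal.toReal_nonneg hp.le]
  rw [heq]
  refine h4.congr' ?_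
  filter_upwards [hufin, hrpos] with n hn hrn
  rw [← ENNReal.ofReal_rpow_of_nonneg ENNReal.toReal_nonneg hrn.le,
    ENNReal.ofReal_toReal hn]

/-- Generalized Hölder inequality for infinitely many functions: if the infinite
product of the `L^{pᵢ}` norms converges to a finite value `L`, then the pointwise
infinite product converges a.e. and its `L^p` norm is at most `L`. -/
theorem generalized_holder_infinite
    {Ω : Type*} [MeasurableSpace Ω] (μ : Measure Ω)
    (p : ℝ) (hp : 0 < p) (P : ℕ → ℝ) (hP : ∀ i, 0 < P i)
    (hsum : HasSum (fun i => 1 / P i) (1 / p))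
    (f : ℕ → Ω → ℝ≥0∞) (hf : ∀ i, Measurable (f i))
    (L : ℝ≥0∞) (hL : L ≠ ∞)
    (hconv : Tendsto (fun n => ∏ i ∈ Finset.range n,
        (∫⁻ x, f i x ^ P i ∂μ) ^ (1 / P i)) atTop (𝓝 L)) :
    (∀ᵐ x ∂μ, ∃ l : ℝ≥0∞,
        Tendsto (fun n => ∏ i ∈ Finset.range n, f i x) atTop (𝓝 l)) ∧
    (∫⁻ x, (iprod fun i => f i x) ^ p ∂μ) ^ (1 / p) ≤ L := by
  classical
  by_cases hzero : ∃ j, (∫⁻ x, f j x ^ P j ∂μ) = 0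
  · obtain ⟨j, hj⟩ := hzero
    have hm : Measurable fun x => f j x ^ P j := (hf j).pow_const _
    have h0 : ∀ᵐ x ∂μ, f j x ^ P j = 0 := (lintegral_eq_zero_iff hm).1 hj
    have hfj : ∀ᵐ x ∂μ, f j x = 0 := by
      filter_upwards [h0] with x hx
      rcases ENNReal.rpow_eq_zero_iff.1 hx with ⟨h, _⟩ | ⟨_, h⟩
      · exact h
      · linarith [hP j]
    have htend : ∀ᵐ x ∂μ, Tendsto (fun n => ∏ i ∈ Finset.range n, f i x) atTop (𝓝 0) := by
      filter_upwards [hfj] with x hx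
      refine tendsto_const_nhds.congr' ?_
      filter_upwards [eventually_ge_atTop (j + 1)] with n hn
      exact (Finset.prod_eq_zero (Finset.mem_range.2 (by omega)) hx).symm
    refine ⟨htend.mono fun x hx => ⟨0, hx⟩, ?_⟩
    have h1 : ∫⁻ x, (iprod fun i => f i x) ^ p ∂μ = 0 := by
      rw [← lintegral_zero]
      apply lintegral_congr_ae
      filter_upwards [htend] with x hx
      rw [iprod, hx.limsup_eq, ENNReal.zero_rpow_of_pos hp]
    rw [h1, ENNReal.zero_rpow_of_pos (by positivity)]
    exact zero_le
  push_neg at hzero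
  have hN0 : ∀ i, ((∫⁻ x, f i x ^ P i ∂μ) ^ (1 / P i)) ≠ 0 := by
    intro i h
    rcases ENNReal.rpow_eq_zero_iff.1 h with ⟨h1, _⟩ | ⟨_, h2⟩
    · exact hzero i h1
    · have h3 : (0:ℝ) < 1 / P i := one_div_pos.2 (hP i)
      linarith
  have hItop : ∀ i, (∫⁻ x, f i x ^ P i ∂μ) ≠ ∞ := by
    by_contra h
    push_neg at h
    obtain ⟨j, hj⟩ := h
    have htop : ∀ᶠ n in atTop, (∏ i ∈ Finset.range n,
        (∫⁻ x, f i x ^ P i ∂μ) ^ (1 / P i)) = ∞ := by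
      filter_upwards [eventually_ge_atTop (j + 1)] with n hn
      rw [← Finset.mul_prod_erase _ _ (Finset.mem_range.2 (by omega : j < n)), hj,
        ENNReal.top_rpow_of_pos (one_div_pos.2 (hP j))]
      exact ENNReal.top_mul (Finset.prod_ne_zero_iff.2 fun i _ => hN0 i)
    have htop' : Tendsto (fun n => ∏ i ∈ Finset.range n,
        (∫⁻ x, f i x ^ P i ∂μ) ^ (1 / P i)) atTop (𝓝 ∞) :=
      tendsto_const_nhds.congr' (htop.mono fun n h => h.symm)
    exact hL (tendsto_nhds_unique hconv htop')
  have hNtop : ∀ i, ((∫⁻ x, f i x ^ P i ∂μ) ^ (1 / P i)) ≠ ∞ := fun i =>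
    ENNReal.rpow_ne_top_of_nonneg (one_div_pos.2 (hP i)).le (hItop i)
  set N : ℕ → ℝ≥0∞ := fun i => (∫⁻ x, f i x ^ P i ∂μ) ^ (1 / P i) with hNdef
  set g : ℕ → Ω → ℝ≥0∞ := fun i x => f i x / N i with hgdef
  have hgmeas : ∀ i, Measurable (g i) := fun i => (hf i).div_const _
  have hgone : ∀ i, ∫⁻ x, g i x ^ P i ∂μ = 1 := by
    intro i
    have hNP : N i ^ P i = ∫⁻ x, f i x ^ P i ∂μ := by
      rw [hNdef, ← ENNReal.rpow_mul, one_div, inv_mul_cancel₀ (hP i).ne', ENNReal.rpow_one]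
    have hinv : (N i ^ P i)⁻¹ ≠ ∞ := by
      rw [hNP]; exact ENNReal.inv_ne_top.2 (hzero i)
    calc ∫⁻ x, g i x ^ P i ∂μ
        = ∫⁻ x, f i x ^ P i * (N i ^ P i)⁻¹ ∂μ := by
          apply lintegral_congr; intro x
          rw [hgdef, ENNReal.div_rpow_of_nonneg _ _ (hP i).le, div_eq_mul_inv]
      _ = (∫⁻ x, f i x ^ P i ∂μ) * ((∫⁻ x, f i x ^ P i ∂μ))⁻¹ := by
          rw [lintegral_mul_const' _ _ hinv, hNP]
      _ = 1 := ENNReal.mul_inv_cancel (hzero i) (hItop i)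
  have hfg : ∀ i x, f i x = N i * g i x := fun i x =>
    (ENNReal.mul_div_cancel (hN0 i) (hNtop i)).symm
  -- choose M s.t. P i ≥ 1 for i ≥ M
  have hsmall : ∀ᶠ i in atTop, 1 / P i < 1 :=
    hsum.summable.tendsto_atTop_zero.eventually_lt_const one_pos
  obtain ⟨M, hM⟩ := eventually_atTop.1 hsmall
  have hPge1 : ∀ i, M ≤ i → 1 ≤ P i := fun i hi =>
    le_of_lt ((div_lt_one (hP i)).1 (hM i hi))
  -- tail sum estimate
  have hint_a : ∀ i, 1 ≤ P i → ∫⁻ x, (g i x - 1) ∂μ ≤ ENNReal.ofReal (1 / P i) := by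
    intro i h1
    calc ∫⁻ x, (g i x - 1) ∂μ
        ≤ ∫⁻ x, g i x ^ P i * (ENNReal.ofReal (P i))⁻¹ ∂μ := by
          apply lintegral_mono; intro x
          have h2 := enn_sub_one_le_rpow_div h1 (g i x)
          rwa [div_eq_mul_inv] at h2
      _ = 1 * (ENNReal.ofReal (P i))⁻¹ := by
          rw [lintegral_mul_const' _ _ (by simp [hP i]), hgone i]
      _ = ENNReal.ofReal (1 / P i) := by
          rw [one_mul, one_div, ← ENNReal.ofReal_inv_of_pos (hP i)]
  have hsum_shift : Summable (fun k => 1 / P (k + M)) :=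
    (summable_nat_add_iff M).2 hsum.summable
  have hbound : ∫⁻ x, ∑' k, (g (k + M) x - 1) ∂μ ≠ ∞ := by
    rw [lintegral_tsum (f := fun k x => g (k + M) x - 1) (fun k => ((hgmeas (k + M)).sub measurable_const).aemeasurable)]
    have hle : ∑' k, ∫⁻ x, (g (k + M) x - 1) ∂μ ≤ ∑' k, ENNReal.ofReal (1 / P (k + M)) :=
      ENNReal.tsum_le_tsum fun k => hint_a (k + M) (hPge1 (k + M) (by omega))
    refine ne_top_of_le_ne_top ?_ hle
    rw [← ENNReal.ofReal_tsum_of_nonneg (fun k => (one_div_pos.2 (hP _)).le) hsum_shift]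
    exact ENNReal.ofReal_ne_top
  have htail_ae : ∀ᵐ x ∂μ, ∑' k, (g (k + M) x - 1) ≠ ∞ := by
    have hmeas : Measurable fun x => ∑' k, (g (k + M) x - 1) :=
      Measurable.ennreal_tsum fun k => (hgmeas _).sub measurable_const
    exact (ae_lt_top hmeas hbound).mono fun x hx => hx.ne
  have hfin : ∀ i, ∀ᵐ x ∂μ, g i x ≠ ∞ := by
    intro i
    have h2 : ∀ᵐ x ∂μ, g i x ^ P i < ∞ :=
      ae_lt_top ((hgmeas i).pow_const _) (by rw [hgone i]; exact ENNReal.one_ne_top)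
    filter_upwards [h2] with x hx h
    rw [h, ENNReal.top_rpow_of_pos (hP i)] at hx
    exact lt_irrefl _ hx
  set G : Ω → ℝ≥0∞ := fun x => limsup (fun n => ∏ i ∈ Finset.range n, g i x) atTop
    with hGdef
  have hGmeas : Measurable G :=
    Measurable.limsup fun n => Finset.measurable_prod _ fun i _ => hgmeas i
  have hGood : ∀ᵐ x ∂μ, G x ≠ ∞ ∧
      Tendsto (fun n => ∏ i ∈ Finset.range n, g i x) atTop (𝓝 (G x)) := by
    filter_upwards [htail_ae, ae_all_iff.2 hfin] with x hx1 hx2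
    have hfull : (∑' i, (g i x - 1)) ≠ ∞ := by
      rw [← Summable.sum_add_tsum_nat_add' (f := fun i => g i x - 1) (k := M) ENNReal.summable]
      refine ENNReal.add_ne_top.2 ⟨?_, hx1⟩
      exact (ENNReal.sum_lt_top.2 fun i _ =>
        lt_top_iff_ne_top.2 (ENNReal.sub_ne_top (hx2 i))).ne
    obtain ⟨l, hl, hlt⟩ := enn_prod_conv (fun i => g i x) hx2 hfull
    have hGx : G x = l := hlt.limsup_eq
    exact ⟨by rw [hGx]; exact hl, by rw [hGx]; exact hlt⟩
  have hmain : ∀ᵐ x ∂μ,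
      Tendsto (fun n => ∏ i ∈ Finset.range n, f i x) atTop (𝓝 (L * G x)) := by
    filter_upwards [hGood] with x hx
    obtain ⟨hx1, hx2⟩ := hx
    have h2 := ENNReal.Tendsto.mul hconv (Or.inr hx1) hx2 (Or.inr hL)
    refine h2.congr fun n => ?_
    rw [← Finset.prod_mul_distrib]
    exact Finset.prod_congr rfl fun i _ => (hfg i x).symm
  refine ⟨hmain.mono fun x hx => ⟨_, hx⟩, ?_⟩
  -- Hölder + Fatou
  have hS := hsum.tendsto_sum_nat
  set r : ℕ → ℝ := fun n => (∑ i ∈ Finset.range n, 1 / P i)⁻¹ with hrdef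
  have hrt : Tendsto r atTop (𝓝 p) := by
    have h2 := hS.inv₀ (by positivity : (1:ℝ) / p ≠ 0)
    rwa [one_div, inv_inv] at h2
  have hSpos : ∀ n, 1 ≤ n → 0 < ∑ i ∈ Finset.range n, 1 / P i := fun n hn =>
    Finset.sum_pos (fun i _ => one_div_pos.2 (hP i)) (Finset.nonempty_range_iff.2 (by omega))
  have hholder : ∀ n, 1 ≤ n → ∫⁻ x, (∏ i ∈ Finset.range n, g i x) ^ r n ∂μ ≤ 1 := by
    intro n hn
    have hrn : 0 < r n := inv_pos.2 (hSpos n hn)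
    have hexp : ∑ i ∈ Finset.range n, r n * (1 / P i) = 1 := by
      rw [← Finset.mul_sum]; exact inv_mul_cancel₀ (hSpos n hn).ne'
    have key := ENNReal.lintegral_prod_norm_pow_le (Finset.range n)
      (f := fun i x => g i x ^ P i) (μ := μ)
      (fun i _ => ((hgmeas i).pow_const _).aemeasurable)
      (p := fun i => r n * (1 / P i)) hexp
      (fun i _ => mul_nonneg hrn.le (one_div_pos.2 (hP i)).le)
    calc ∫⁻ x, (∏ i ∈ Finset.range n, g i x) ^ r n ∂μ
        = ∫⁻ x, ∏ i ∈ Finset.range n, (g i x ^ P i) ^ (r n * (1 / P i)) ∂μ := by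
          apply lintegral_congr; intro x
          rw [← ENNReal.prod_rpow_of_nonneg hrn.le]
          apply Finset.prod_congr rfl
          intro i _
          rw [← ENNReal.rpow_mul]
          congr 1
          rw [mul_comm (r n), ← mul_assoc, one_div, mul_inv_cancel₀ (hP i).ne', one_mul]
      _ ≤ ∏ i ∈ Finset.range n, (∫⁻ x, g i x ^ P i ∂μ) ^ (r n * (1 / P i)) := key
      _ = 1 := Finset.prod_eq_one fun i _ => by rw [hgone i, ENNReal.one_rpow]
  have hfatou : ∫⁻ x, G x ^ p ∂μ ≤ 1 := by
    have hmeasn : ∀ n, Measurable fun x => (∏ i ∈ Finset.range n, g i x) ^ r n :=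
      fun n => (Finset.measurable_prod _ fun i _ => hgmeas i).pow_const _
    have hae : ∀ᵐ x ∂μ, G x ^ p =
        liminf (fun n => (∏ i ∈ Finset.range n, g i x) ^ r n) atTop := by
      filter_upwards [hGood] with x hx
      exact ((enn_rpow_tendsto_var hx.1 hx.2 hp hrt).liminf_eq).symm
    calc ∫⁻ x, G x ^ p ∂μ
        = ∫⁻ x, liminf (fun n => (∏ i ∈ Finset.range n, g i x) ^ r n) atTop ∂μ :=
          lintegral_congr_ae hae
      _ ≤ liminf (fun n => ∫⁻ x, (∏ i ∈ Finset.range n, g i x) ^ r n ∂μ) atTop :=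
          lintegral_liminf_le hmeasn
      _ ≤ 1 := by
          have h1 : ∀ᶠ n in atTop,
              (∫⁻ x, (∏ i ∈ Finset.range n, g i x) ^ r n ∂μ) ≤ (1:ℝ≥0∞) :=
            eventually_atTop.2 ⟨1, hholder⟩
          calc liminf (fun n => ∫⁻ x, (∏ i ∈ Finset.range n, g i x) ^ r n ∂μ) atTop
              ≤ liminf (fun _ => (1:ℝ≥0∞)) atTop := liminf_le_liminf h1
            _ = 1 := liminf_const 1
  have hlim_eq : ∀ᵐ x ∂μ, (iprod fun i => f i x) ^ p = (L * G x) ^ p := by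
    filter_upwards [hmain] with x hx
    rw [iprod, hx.limsup_eq]
  calc (∫⁻ x, (iprod fun i => f i x) ^ p ∂μ) ^ (1 / p)
      = (∫⁻ x, (L * G x) ^ p ∂μ) ^ (1 / p) := by rw [lintegral_congr_ae hlim_eq]
    _ = (L ^ p * ∫⁻ x, G x ^ p ∂μ) ^ (1 / p) := by
        congr 1
        rw [← lintegral_const_mul' _ _ (ENNReal.rpow_ne_top_of_nonneg hp.le hL)]
        apply lintegral_congr; intro x
        rw [ENNReal.mul_rpow_of_nonneg _ _ hp.le]
    _ ≤ (L ^ p * 1) ^ (1 / p) := by gcongr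
    _ = L := by
        rw [mul_one, ← ENNReal.rpow_mul, mul_one_div, div_self hp.ne', ENNReal.rpow_one]
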